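/- Let λ, μ, α, β, m₁, m₂, m₃, m₄, m₅, m₆ ∈ ℂ, and in ℂ[U,V,W] let I = (V − λ·U − μ·W, U² − α·UW − β·W²). Define M₂₃ = (−U + m₂W)(−U + m₆W) − (V + m₅W)(m₃W), M₁₃ = (V + m₁W)(−U + m₆W) − (m₄W)(m₃W), and M₁₂ = (V + m₁W)(V + m₅W) − (m₄W)(−U + m₂W) (the 2×2 minors of the matrix with rows (V + m₁W, m₄W), (−U + m₂W, V + m₅W), (m₃W, −U + m₆W)). Then M₂₃ − ((α − m₂ − m₆ − λm₃)·UW + (β − μm₃ + m₂m₆ − m₃m₅)·W²) ∈ I, M₁₃ − ((λm₆ − λα − μ − m₁)·UW + (μm₆ − λβ + m₁m₆ − m₃m₄)·W²) ∈ I, and M₁₂ − ((λ²α + 2λμ + m₄ + λm₁ + λm₅)·UW + (λ²β + μ² + μm₁ + μm₅ + m₁m₅ − m₂m₄)·W²) ∈ I. -/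
import Mathlib


open MvPolynomial

/-- In `ℂ[U,V,W]` (with `U = X 0`, `V = X 1`, `W = X 2`), let
`I = (V − λU − μW, U² − αUW − βW²)`, and let `M₂₃`, `M₁₃`, `M₁₂` be the 2×2 minors of the
matrix with rows `(V + m₁W, m₄W)`, `(−U + m₂W, V + m₅W)`, `(m₃W, −U + m₆W)`. Then modulo `I`
each minor is congruent to the stated combination of `UW` and `W²`. -/
theorem minors_congruences (lam mu al be m₁ m₂ m₃ m₄ m₅ m₆ : ℂ) :
    ((-X 0 + C m₂ * X 2) * (-X 0 + C m₆ * X 2) -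
          ((X 1 : MvPolynomial (Fin 3) ℂ) + C m₅ * X 2) * (C m₃ * X 2) -
        (C (al - m₂ - m₆ - lam * m₃) * (X 0 * X 2) +
          C (be - mu * m₃ + m₂ * m₆ - m₃ * m₅) * X 2 ^ 2) ∈
      Ideal.span {(X 1 : MvPolynomial (Fin 3) ℂ) - C lam * X 0 - C mu * X 2,
        X 0 ^ 2 - C al * (X 0 * X 2) - C be * X 2 ^ 2}) ∧
    (((X 1 : MvPolynomial (Fin 3) ℂ) + C m₁ * X 2) * (-X 0 + C m₆ * X 2) -
          (C m₄ * X 2) * (C m₃ * X 2) -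
        (C (lam * m₆ - lam * al - mu - m₁) * (X 0 * X 2) +
          C (mu * m₆ - lam * be + m₁ * m₆ - m₃ * m₄) * X 2 ^ 2) ∈
      Ideal.span {(X 1 : MvPolynomial (Fin 3) ℂ) - C lam * X 0 - C mu * X 2,
        X 0 ^ 2 - C al * (X 0 * X 2) - C be * X 2 ^ 2}) ∧
    (((X 1 : MvPolynomial (Fin 3) ℂ) + C m₁ * X 2) * (X 1 + C m₅ * X 2) -
          (C m₄ * X 2) * (-X 0 + C m₂ * X 2) -
        (C (lam ^ 2 * al + 2 * lam * mu + m₄ + lam * m₁ + lam * m₅) * (X 0 * X 2) +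
          C (lam ^ 2 * be + mu ^ 2 + mu * m₁ + mu * m₅ + m₁ * m₅ - m₂ * m₄) * X 2 ^ 2) ∈
      Ideal.span {(X 1 : MvPolynomial (Fin 3) ℂ) - C lam * X 0 - C mu * X 2,
        X 0 ^ 2 - C al * (X 0 * X 2) - C be * X 2 ^ 2}) := by
  refine ⟨Ideal.mem_span_pair.mpr ⟨-(C m₃ * X 2), 1, ?_⟩,
    Ideal.mem_span_pair.mpr ⟨-X 0 + C m₆ * X 2, -C lam, ?_⟩,
    Ideal.mem_span_pair.mpr
      ⟨X 1 + C lam * X 0 + C mu * X 2 + C m₁ * X 2 + C m₅ * X 2, C lam ^ 2, ?_⟩⟩ <;>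
  · simp only [C_sub, C_mul, C_add, C_pow, map_ofNat]
    ring
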